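/- Let p₋ ∈ ℕ₀, p ∈ ℕ, c₀,₊ ∈ ℂ∖{0}, let I ⊆ ℝ be an open interval, and let μ₁, …, μ_p : I → ℂ be continuously differentiable functions that are pairwise distinct and nonvanishing at every t ∈ I. Let a : I → ℂ be differentiable and nonvanishing, and define F(z,t) := −c₀,₊ a(t) z^{−p₋} Π_{j=1}^{p}(z − μ_j(t)) for z ∈ ℂ∖{0}, t ∈ I. Suppose G, F̃, G̃, K̃ : (ℂ∖{0}) × I → ℂ are such that ∂ₜF(z,t) = −2iG(z,t)F̃(z,t) + i(G̃(z,t) + K̃(z,t))F(z,t) for all z ∈ ℂ∖{0} and t ∈ I. Then the zeros μ_j satisfy the Dubrovin-type equations μ_j'(t) = −(2i/c₀,₊)·F̃(μ_j(t),t)·μ_j(t)^{p₋}·G(μ_j(t),t)·a(t)^{−1}·Π_{k≠j}(μ_j(t) − μ_k(t))^{−1} for j = 1, …, p and all t ∈ I. -/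

import Mathlib

/-- Dubrovin-type equations for the motion of the zeros `μ_j` of `z^{p₋}F(z,·)`,
where `F(z,t) = −c₀,₊ a(t) z^{−p₋} Π_{j=1}^{p}(z − μ_j(t))` evolves according to
`∂ₜF = −2iG F̃ + i(G̃ + K̃)F`:
`μ_j' = −(2i/c₀,₊) F̃(μ_j) μ_j^{p₋} G(μ_j) a⁻¹ Π_{k≠j}(μ_j − μ_k)⁻¹`. -/
theorem dubrovin_equations (pm : ℕ) (p : ℕ) (hp : 1 ≤ p)
    (c0p : ℂ) (hc0p : c0p ≠ 0) (a b : ℝ)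
    (μ μ' : Fin p → ℝ → ℂ)
    (hμ : ∀ (j : Fin p), ∀ t ∈ Set.Ioo a b, HasDerivAt (μ j) (μ' j t) t)
    (hμcont : ∀ j : Fin p, ContinuousOn (μ' j) (Set.Ioo a b))
    (hdistinct : ∀ t ∈ Set.Ioo a b, ∀ j k : Fin p, j ≠ k → μ j t ≠ μ k t)
    (hnonzero : ∀ t ∈ Set.Ioo a b, ∀ j : Fin p, μ j t ≠ 0)
    (A : ℝ → ℂ)
    (hA : ∀ t ∈ Set.Ioo a b, DifferentiableAt ℝ A t)
    (hAne : ∀ t ∈ Set.Ioo a b, A t ≠ 0)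
    (G Ft Gt Kt : ℂ → ℝ → ℂ)
    (hF : ∀ z : ℂ, z ≠ 0 → ∀ t ∈ Set.Ioo a b,
      HasDerivAt (fun s => -c0p * A s * z ^ (-(pm : ℤ)) * ∏ j, (z - μ j s))
        (-2 * Complex.I * G z t * Ft z t
          + Complex.I * (Gt z t + Kt z t)
            * (-c0p * A t * z ^ (-(pm : ℤ)) * ∏ j, (z - μ j t))) t) :
    ∀ (j : Fin p), ∀ t ∈ Set.Ioo a b,
      μ' j t = -(2 * Complex.I / c0p) * Ft (μ j t) t * μ j t ^ pm
        * G (μ j t) t * (A t)⁻¹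
        * (∏ k ∈ Finset.univ.erase j, (μ j t - μ k t))⁻¹ := by
  intro j t ht
  set z : ℂ := μ j t with hz
  have hzne : z ≠ 0 := hnonzero t ht j
  have hzp : z ^ (-(pm : ℤ)) ≠ 0 := zpow_ne_zero _ hzne
  -- derivative of the product
  have hP : HasDerivAt (fun s => ∏ k, (z - μ k s))
      (∑ k, (∏ l ∈ Finset.univ.erase k, (z - μ l t)) • (-μ' k t)) t := by
    exact HasDerivAt.fun_finsetProd (fun k _ => by simpa using (hasDerivAt_const t z).fun_sub (hμ k t ht))
  have hPt : (∏ k, (z - μ k t)) = 0 :=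
    Finset.prod_eq_zero (Finset.mem_univ j) (by simp [hz])
  have hsum : (∑ k, (∏ l ∈ Finset.univ.erase k, (z - μ l t)) • (-μ' k t))
      = (∏ l ∈ Finset.univ.erase j, (z - μ l t)) * (-μ' j t) := by
    rw [Finset.sum_eq_single j]
    · simp [smul_eq_mul]
    · intro k _ hkj
      have : (∏ l ∈ Finset.univ.erase k, (z - μ l t)) = 0 :=
        Finset.prod_eq_zero (Finset.mem_erase.mpr ⟨(Ne.symm hkj), Finset.mem_univ j⟩)
          (by simp [hz])
      simp [this]
    · simp
  -- derivative of the full function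
  have hAd : HasDerivAt A (deriv A t) t := (hA t ht).hasDerivAt
  have hfull : HasDerivAt (fun s => -c0p * A s * z ^ (-(pm : ℤ)) * ∏ k, (z - μ k s))
      (-c0p * A t * z ^ (-(pm : ℤ)) * ((∏ l ∈ Finset.univ.erase j, (z - μ l t)) * (-μ' j t)))
      t := by
    have h1 : HasDerivAt (fun s => -c0p * A s * z ^ (-(pm : ℤ)))
        (-c0p * deriv A t * z ^ (-(pm : ℤ))) t := by
      simpa [mul_comm, mul_assoc, mul_left_comm] using
        (hAd.const_mul (-c0p)).mul_const (z ^ (-(pm : ℤ)))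
    have := h1.fun_mul hP
    rw [hsum] at this
    simpa [hPt] using this
  have key := (hF z hzne t ht).unique hfull
  rw [hPt, mul_zero, mul_zero, add_zero] at key
  -- key : -2 * I * G z t * Ft z t = -c0p * A t * z^(-pm) * (∏ erase * (-μ' j t))
  have hprodne : (∏ l ∈ Finset.univ.erase j, (z - μ l t)) ≠ 0 := by
    apply Finset.prod_ne_zero_iff.mpr
    intro k hk
    have hkj : k ≠ j := (Finset.mem_erase.mp hk).1
    exact sub_ne_zero.mpr (hdistinct t ht j k (Ne.symm hkj))
  have hAt : A t ≠ 0 := hAne t ht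
  have hzpow : z ^ (-(pm : ℤ)) = (z ^ pm)⁻¹ := by
    rw [zpow_neg, zpow_natCast]
  have hzpmne : (z : ℂ) ^ pm ≠ 0 := pow_ne_zero _ hzne
  rw [hzpow] at key
  field_simp at key ⊢
  linear_combination -key
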